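/- arXiv:0804.2228 — 3 statements merged into one kernel-verified Lean document; each statement's English description precedes it below -/
import Mathlib

section
/- (Projective change of variables) Let n be a positive integer, γ ≥ 0 a real number, and β a real number with β > n(γ(n-1)+1)/2. Then the substitution x_i = y_i/√(1 - ∑_j y_j^2) gives ∫_{ℝ^n} |Δ(x)|^{2γ} (1 + ∑_{i=1}^n x_i^2)^{-β} dx_1⋯dx_n = ∫_{{y ∈ ℝ^n : ∑_j y_j^2 < 1}} |Δ(y)|^{2γ} (1 - ∑_{i=1}^n y_i^2)^{β - n(γ(n-1)+1)/2 - 1} dy_1⋯dy_n. -/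
open MeasureTheory Real Finset

/-- The Vandermonde product `Δ(x) = ∏_{i<j} (x_i - x_j)`. -/
noncomputable def vandermonde {n : ℕ} (x : Fin n → ℝ) : ℝ :=
  ∏ i : Fin n, ∏ j ∈ Finset.Ioi i, (x i - x j)

namespace ProjCoV

variable {n : ℕ}

/-- The squared norm. -/
def Q (y : Fin n → ℝ) : ℝ := ∑ j : Fin n, (y j) ^ 2

lemma Q_nonneg (y : Fin n → ℝ) : 0 ≤ Q y :=
  Finset.sum_nonneg fun j _ => sq_nonneg _

lemma Q_smul (a : ℝ) (y : Fin n → ℝ) : Q (a • y) = a ^ 2 * Q y := by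
  simp [Q, Finset.mul_sum, mul_pow]

noncomputable def c (y : Fin n → ℝ) : ℝ := (1 - Q y) ^ (-(1:ℝ)/2)

noncomputable def φ (y : Fin n → ℝ) : Fin n → ℝ := c y • y

/-- Vandermonde scaling. -/
lemma vandermonde_smul (a : ℝ) (y : Fin n → ℝ) :
    vandermonde (a • y) = a ^ (∑ i : Fin n, (Finset.Ioi i).card) * vandermonde y := by
  unfold vandermonde
  rw [← Finset.prod_pow_eq_pow_sum, ← Finset.prod_mul_distrib]
  refine Finset.prod_congr rfl fun i _ => ?_
  rw [← Finset.prod_const, ← Finset.prod_mul_distrib]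
  refine Finset.prod_congr rfl fun j _ => ?_
  simp [mul_sub]

lemma two_K : 2 * (∑ i : Fin n, (Finset.Ioi i).card) = n * (n - 1) := by
  have h1 : (∑ i : Fin n, (Finset.Ioi i).card) = ∑ i : Fin n, (n - 1 - (i:ℕ)) :=
    Finset.sum_congr rfl fun i _ => Fin.card_Ioi _
  rw [h1, Fin.sum_univ_eq_sum_range (fun i => n - 1 - i) n,
    Finset.sum_range_reflect (fun i => i) n, mul_comm]
  exact Finset.sum_range_id_mul_two n

end ProjCoV

namespace ProjCoV

variable {n : ℕ}

lemma rpow_pow (t : ℝ) (ht : 0 < t) (k : ℕ) :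
    (t ^ (-(1:ℝ)/2)) ^ k = t ^ (-(k:ℝ)/2) := by
  rw [← Real.rpow_natCast (t ^ (-(1:ℝ)/2)) k, ← Real.rpow_mul ht.le]
  ring_nf

noncomputable def M (y : Fin n → ℝ) : Matrix (Fin n) (Fin n) ℝ :=
  c y • (1 : Matrix (Fin n) (Fin n) ℝ) + (c y ^ 3) • Matrix.vecMulVec y y

noncomputable def D (y : Fin n → ℝ) : (Fin n → ℝ) →L[ℝ] (Fin n → ℝ) :=
  LinearMap.toContinuousLinearMap (Matrix.toLin' (M y))

lemma det_D (y : Fin n → ℝ) (hy : Q y < 1) :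
    (D y).det = (1 - Q y) ^ (-(n:ℝ)/2 - 1) := by
  have ht : 0 < 1 - Q y := by linarith
  have h1 : (D y).det = (M y).det := by
    simp [D, ContinuousLinearMap.det, LinearMap.det_toLin']
  have h2 : M y = c y • ((1 : Matrix (Fin n) (Fin n) ℝ) +
      Matrix.replicateCol (Fin 1) ((c y ^ 2) • y) * Matrix.replicateRow (Fin 1) y) := by
    erw [← Matrix.vecMulVec_eq]
    unfold M
    rw [smul_add]
    congr 1
    ext i j
    simp [Matrix.vecMulVec_apply]
    ring
  rw [h1, h2, Matrix.det_smul]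
  erw [Matrix.det_one_add_replicateCol_mul_replicateRow]
  have hc2 : c y ^ 2 = (1 - Q y)⁻¹ := by
    rw [c, rpow_pow _ ht]
    norm_num [Real.rpow_neg_one]
  have hdot : dotProduct y ((c y ^ 2) • y) = c y ^ 2 * Q y := by
    simp [dotProduct, Q, Finset.mul_sum, sq]
    exact Finset.sum_congr rfl fun j _ => by ring
  rw [hdot, hc2, c, rpow_pow _ ht]
  have : (1 + (1 - Q y)⁻¹ * Q y) = (1 - Q y)⁻¹ := by
    field_simp; ring
  rw [this, Fintype.card_fin, ← Real.rpow_neg_one (1 - Q y), ← Real.rpow_add ht]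
  ring_nf

end ProjCoV

namespace ProjCoV

variable {n : ℕ}

lemma hasFDerivAt_φ (y : Fin n → ℝ) (hy : Q y < 1) : HasFDerivAt φ (D y) y := by
  have ht : 0 < 1 - Q y := by linarith
  set Q' : (Fin n → ℝ) →L[ℝ] ℝ :=
    ∑ j : Fin n, (2 * y j) • (ContinuousLinearMap.proj j) with hQ'def
  have hQ : HasFDerivAt Q Q' y := by
    unfold Q
    refine HasFDerivAt.fun_sum fun j _ => ?_
    have h := ((ContinuousLinearMap.proj j :
      (Fin n → ℝ) →L[ℝ] ℝ).hasFDerivAt (x := y)).mul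
      ((ContinuousLinearMap.proj j : (Fin n → ℝ) →L[ℝ] ℝ).hasFDerivAt (x := y))
    simp only [ContinuousLinearMap.proj_apply] at h
    have e1 : (fun z : Fin n → ℝ => z j ^ 2) = (fun z => z j * z j) :=
      funext fun z => pow_two (z j)
    have e2 : (2 * y j) • (ContinuousLinearMap.proj j : (Fin n → ℝ) →L[ℝ] ℝ)
        = y j • ContinuousLinearMap.proj j + y j • ContinuousLinearMap.proj j := by
      rw [two_mul, add_smul]
    rw [e1, e2]
    exact h
  have hc' : HasFDerivAt c (((-(1:ℝ)/2) * (1 - Q y) ^ (-(1:ℝ)/2 - 1)) • (-Q')) y := by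
    have hg := Real.hasDerivAt_rpow_const (x := 1 - Q y) (p := -(1:ℝ)/2) (Or.inl ht.ne')
    have hf : HasFDerivAt (fun z => 1 - Q z) (-Q') y := hQ.const_sub 1
    exact hg.comp_hasFDerivAt y hf
  have hφ' : HasFDerivAt (fun z : Fin n → ℝ => c z • z)
      (c y • ContinuousLinearMap.id ℝ (Fin n → ℝ) +
        ((((-(1:ℝ)/2)) * (1 - Q y) ^ (-(1:ℝ)/2 - 1)) • (-Q')).smulRight y) y :=
    hc'.smul (hasFDerivAt_id y)
  have hDeq : D y = c y • ContinuousLinearMap.id ℝ (Fin n → ℝ) +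
        ((((-(1:ℝ)/2)) * (1 - Q y) ^ (-(1:ℝ)/2 - 1)) • (-Q')).smulRight y := by
    have hc3 : c y ^ 3 = (1 - Q y) ^ (-(1:ℝ)/2 - 1) := by
      rw [c, rpow_pow _ ht]
      norm_num
    ext v i
    simp [D, M, Matrix.toLin'_apply, Matrix.add_mulVec, Matrix.smul_mulVec,
      Matrix.one_mulVec, Matrix.mulVec, dotProduct, Matrix.vecMulVec_apply,
      hQ'def, ContinuousLinearMap.proj_apply, Finset.mul_sum, Finset.sum_mul, hc3]
    rw [← Finset.sum_neg_distrib]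
    exact Finset.sum_congr rfl fun j _ => by ring
  rw [hDeq]
  exact hφ'

end ProjCoV

namespace ProjCoV

variable {n : ℕ}

lemma Q_φ (y : Fin n → ℝ) (hy : Q y < 1) : Q (φ y) = Q y / (1 - Q y) := by
  have ht : 0 < 1 - Q y := by linarith
  rw [φ, Q_smul, c, rpow_pow _ ht]
  norm_num [Real.rpow_neg_one]
  rw [inv_mul_eq_div]

lemma injOn : Set.InjOn (φ (n := n)) {y | Q y < 1} := by
  intro y hy z hz h
  have hy' : Q y < 1 := hy
  have hz' : Q z < 1 := hz
  have hty : 0 < 1 - Q y := by linarith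
  have htz : 0 < 1 - Q z := by linarith
  have h1 : Q y / (1 - Q y) = Q z / (1 - Q z) := by
    rw [← Q_φ y hy', ← Q_φ z hz', h]
  have hQeq : Q y = Q z := by
    field_simp at h1
    nlinarith [h1]
  have hc0 : c y ≠ 0 := (Real.rpow_pos_of_pos hty _).ne'
  have hcc : c y = c z := by rw [c, c, hQeq]
  have h2 : c y • y = c y • z := by
    calc c y • y = φ y := rfl
      _ = φ z := h
      _ = c y • z := by rw [φ, hcc]
  exact smul_right_injective (Fin n → ℝ) hc0 h2

lemma surj : φ '' {y : Fin n → ℝ | Q y < 1} = Set.univ := by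
  apply Set.eq_univ_of_forall
  intro x
  have hr : 0 < 1 + Q x := by linarith [Q_nonneg x]
  set y := ((1 + Q x) ^ (-(1:ℝ)/2)) • x with hydef
  have hQy : Q y = Q x / (1 + Q x) := by
    rw [hydef, Q_smul, rpow_pow _ hr]
    norm_num [Real.rpow_neg_one]
    rw [inv_mul_eq_div]
  have hy : Q y < 1 := by
    rw [hQy, div_lt_one hr]; linarith
  have h1 : 1 - Q y = (1 + Q x)⁻¹ := by
    rw [hQy]; field_simp; ring
  refine ⟨y, hy, ?_⟩
  show c y • y = x
  rw [c, h1, ← Real.rpow_neg_one (1 + Q x), ← Real.rpow_mul hr.le,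
    hydef, smul_smul, ← Real.rpow_add hr]
  norm_num

lemma combine (t v A B C E : ℝ) (ht : 0 < t) (h : A + B + C = E) :
    t ^ A * (t ^ B * v * t ^ C) = v * t ^ E := by
  rw [← h, Real.rpow_add ht, Real.rpow_add ht]; ring

lemma integrand_eq (hn : 0 < n) (γ β : ℝ) (y : Fin n → ℝ) (hy : Q y < 1) :
    |(D y).det| * (|vandermonde (φ y)| ^ (2*γ) * (1 + Q (φ y)) ^ (-β))
      = |vandermonde y| ^ (2*γ) *
        (1 - Q y) ^ (β - (n:ℝ)*(γ*((n:ℝ)-1)+1)/2 - 1) := by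
  have ht : 0 < 1 - Q y := by linarith
  set K := ∑ i : Fin n, (Finset.Ioi i).card with hKdef
  have hK : (K:ℝ) = (n:ℝ) * ((n:ℝ)-1) / 2 := by
    have h2 := two_K (n := n)
    have h3 : ((2 * K : ℕ) : ℝ) = ((n * (n-1) : ℕ) : ℝ) := by rw [← hKdef] at h2; rw [h2]
    push_cast [Nat.cast_sub hn] at h3
    linarith
  have hcpos : 0 < c y := Real.rpow_pos_of_pos ht _
  have h1 : 1 + Q (φ y) = (1 - Q y)⁻¹ := by
    rw [Q_φ y hy]; field_simp; ring
  have hv : |vandermonde (φ y)| = c y ^ K * |vandermonde y| := by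
    rw [φ, vandermonde_smul, abs_mul, abs_of_pos (pow_pos hcpos K)]
  rw [det_D y hy, h1, hv, Real.mul_rpow (pow_pos hcpos K).le (abs_nonneg _),
    abs_of_pos (Real.rpow_pos_of_pos ht _), c, rpow_pow _ ht,
    ← Real.rpow_mul ht.le, Real.inv_rpow ht.le, ← Real.rpow_neg ht.le]
  exact combine _ _ _ _ _ _ ht (by rw [hK]; ring)

end ProjCoV

open ProjCoV in
/-- **Projective change of variables**: the Cauchy-type Selberg integral over `ℝ^n`
equals the corresponding integral over the open unit ball. -/
theorem projective_change_of_variables (n : ℕ) (hn : 0 < n) (γ : ℝ) (hγ : 0 ≤ γ)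
    (β : ℝ) (hβ : (n : ℝ) * (γ * ((n : ℝ) - 1) + 1) / 2 < β) :
    (∫ x : Fin n → ℝ,
        |vandermonde x| ^ (2 * γ) * (1 + ∑ i : Fin n, (x i) ^ 2) ^ (-β)) =
      ∫ y in {y : Fin n → ℝ | ∑ j : Fin n, (y j) ^ 2 < 1},
        |vandermonde y| ^ (2 * γ) *
          (1 - ∑ i : Fin n, (y i) ^ 2) ^ (β - (n : ℝ) * (γ * ((n : ℝ) - 1) + 1) / 2 - 1) := by
  have hset : {y : Fin n → ℝ | ∑ j : Fin n, (y j) ^ 2 < 1} = {y | Q y < 1} := rfl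
  rw [hset]
  have hS : MeasurableSet {y : Fin n → ℝ | Q y < 1} := by
    refine (isOpen_lt ?_ continuous_const).measurableSet
    exact continuous_finset_sum _ fun j _ => (continuous_apply j).pow 2
  set g : (Fin n → ℝ) → ℝ :=
    fun x => |vandermonde x| ^ (2 * γ) * (1 + ∑ i : Fin n, (x i) ^ 2) ^ (-β) with hg
  have key := integral_image_eq_integral_abs_det_fderiv_smul (μ := volume) hS
    (fun y hy => (hasFDerivAt_φ y hy).hasFDerivWithinAt) injOn g
  calc (∫ x : Fin n → ℝ, g x) = ∫ x in Set.univ, g x := setIntegral_univ.symm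
    _ = ∫ x in φ '' {y : Fin n → ℝ | Q y < 1}, g x := by rw [surj]
    _ = ∫ y in {y : Fin n → ℝ | Q y < 1}, |(D y).det| • g (φ y) := key
    _ = ∫ y in {y : Fin n → ℝ | Q y < 1}, |vandermonde y| ^ (2 * γ) *
          (1 - ∑ i : Fin n, (y i) ^ 2) ^ (β - (n : ℝ) * (γ * ((n : ℝ) - 1) + 1) / 2 - 1) := by
      refine setIntegral_congr_fun hS fun y hy => ?_
      have := integrand_eq hn γ β y hy
      simpa [smul_eq_mul, hg, Q] using this
end

section
/- (Vandermonde integral over the unit ball) For every positive integer n, ∫_{{y ∈ ℝ^n : ∑_j y_j^2 ≤ 1}} Δ(y)^2 dy_1⋯dy_n = [1/Γ(n²/2 + 1)] · (2π)^{n/2} · 2^{-n²/2} · ∏_{j=1}^n Γ(1+j). -/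
open MeasureTheory Real Finset

open Polynomial


noncomputable def HP (n : ℕ) : Polynomial ℝ := (Polynomial.hermite n).map (Int.castRingHom ℝ)
lemma HP_monic (n : ℕ) : (HP n).Monic :=
  (Polynomial.hermite_monic n).map (Int.castRingHom ℝ)
lemma HP_natDegree (n : ℕ) : (HP n).natDegree = n := by
  rw [HP, (Polynomial.hermite_monic n).natDegree_map, Polynomial.natDegree_hermite]
lemma HP_zero : HP 0 = 1 := by simp [HP, Polynomial.hermite_zero]
lemma HP_succ (n : ℕ) : HP (n + 1) = X * HP n - derivative (HP n) := by
  rw [HP, Polynomial.hermite_succ, Polynomial.map_sub, Polynomial.map_mul, map_X,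
    ← derivative_map, HP]
lemma integrable_poly_gaussian (p : Polynomial ℝ) :
    Integrable fun x : ℝ => p.eval x * Real.exp (-(x ^ 2 / 2)) := by
  induction p using Polynomial.induction_on' with
  | add p q hp hq => simpa [add_mul] using (show Integrable fun x : ℝ => p.eval x * Real.exp (-(x ^ 2 / 2)) + q.eval x * Real.exp (-(x ^ 2 / 2)) from hp.add hq)
  | monomial k a =>
      have h : Integrable fun x : ℝ => x ^ (k : ℝ) * Real.exp (-(1/2 : ℝ) * x ^ 2) :=
        integrable_rpow_mul_exp_neg_mul_sq (by norm_num)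
          (by exact_mod_cast neg_one_lt_zero.trans_le (Nat.cast_nonneg k))
      have h2 : Integrable fun x : ℝ => a * (x ^ k * Real.exp (-(x ^ 2 / 2))) := by
        refine (Integrable.const_mul ?_ a)
        simp only [Real.rpow_natCast] at h
        convert h using 2 with x
        ring_nf
      simpa [Polynomial.eval_monomial, mul_assoc] using h2

lemma hasDerivAt_gaussian (x : ℝ) :
    HasDerivAt (fun y : ℝ => Real.exp (-(y ^ 2 / 2))) (-x * Real.exp (-(x ^ 2 / 2))) x := by
  have h1 : HasDerivAt (fun y : ℝ => -(y ^ 2 / 2)) (-x) x := by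
    have := (hasDerivAt_pow 2 x).div_const 2
    exact (by simpa using this.neg : HasDerivAt (-fun y : ℝ => y ^ 2 / 2) (-x) x)
  simpa [mul_comm] using h1.exp

lemma hasDerivAt_HP_gaussian (k : ℕ) (x : ℝ) :
    HasDerivAt (fun y : ℝ => (HP k).eval y * Real.exp (-(y ^ 2 / 2)))
      (-((HP (k + 1)).eval x * Real.exp (-(x ^ 2 / 2)))) x := by
  have h := ((HP k).hasDerivAt x).mul (hasDerivAt_gaussian x)
  refine h.congr_deriv ?_
  rw [HP_succ]
  simp only [eval_sub, eval_mul, eval_X]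
  ring

lemma integral_poly_mul_HP_gaussian (k : ℕ) (p : Polynomial ℝ) :
    ∫ x : ℝ, p.eval x * ((HP k).eval x * Real.exp (-(x ^ 2 / 2)))
      = ∫ x : ℝ, (derivative^[k] p).eval x * Real.exp (-(x ^ 2 / 2)) := by
  induction k generalizing p with
  | zero => simp [HP_zero]
  | succ k ih =>
      have hibp := MeasureTheory.integral_mul_deriv_eq_deriv_mul_of_integrable
        (u := fun x => p.eval x) (v := fun x => (HP k).eval x * Real.exp (-(x ^ 2 / 2)))
        (u' := fun x => (derivative p).eval x)
        (v' := fun x => -((HP (k + 1)).eval x * Real.exp (-(x ^ 2 / 2))))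
        (fun x _ => p.hasDerivAt x) (fun x _ => hasDerivAt_HP_gaussian k x)
        ?_ ?_ ?_
      · have h1 : (∫ x : ℝ, p.eval x * -((HP (k + 1)).eval x * Real.exp (-(x ^ 2 / 2))))
            = -∫ x : ℝ, p.eval x * ((HP (k + 1)).eval x * Real.exp (-(x ^ 2 / 2))) := by
          rw [← MeasureTheory.integral_neg]; congr 1; ext x; ring
        rw [h1] at hibp
        have h2 : (∫ x : ℝ, p.eval x * ((HP (k+1)).eval x * Real.exp (-(x ^ 2 / 2))))
            = ∫ x : ℝ, (derivative p).eval x * ((HP k).eval x * Real.exp (-(x ^ 2 / 2))) := by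
          have := neg_injective hibp
          linarith [this]
        rw [h2, ih (derivative p), Function.iterate_succ_apply]
      · -- Integrable (u * v')
        have := (integrable_poly_gaussian (p * HP (k+1))).neg
        refine this.congr (Filter.Eventually.of_forall fun x => ?_)
        simp only [Pi.mul_apply, Pi.neg_apply, eval_mul]
        ring
      · have := integrable_poly_gaussian (derivative p * HP k)
        refine this.congr (Filter.Eventually.of_forall fun x => ?_)
        simp only [Pi.mul_apply, eval_mul]
        ring
      · have := integrable_poly_gaussian (p * HP k)
        refine this.congr (Filter.Eventually.of_forall fun x => ?_)
        simp only [Pi.mul_apply, eval_mul]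
        ring

lemma integral_gaussian_half : (∫ x : ℝ, Real.exp (-(x ^ 2 / 2))) = Real.sqrt (2 * π) := by
  have := integral_gaussian (1/2 : ℝ)
  have h : ∀ x : ℝ, Real.exp (-(1/2 : ℝ) * x ^ 2) = Real.exp (-(x ^ 2 / 2)) := by
    intro x; ring_nf
  simp only [h] at this
  rw [this, show π / (1/2:ℝ) = 2 * π from by ring]

lemma iterate_derivative_HP_self (a : ℕ) :
    derivative^[a] (HP a) = Polynomial.C ((Nat.factorial a) : ℝ) := by
  have hdeg : (derivative^[a] (HP a)).natDegree = 0 := by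
    have := Polynomial.natDegree_iterate_derivative (HP a) a
    rw [HP_natDegree] at this
    omega
  have := Polynomial.eq_C_of_natDegree_le_zero (le_of_eq hdeg)
  rw [this]
  congr 1
  rw [Polynomial.coeff_iterate_derivative]
  simp only [zero_add]
  rw [show (HP a).coeff a = 1 from by
    have := HP_monic a; have h2 := HP_natDegree a
    simpa [Polynomial.Monic, Polynomial.leadingCoeff, h2] using this]
  simp [Nat.descFactorial_self]

lemma integral_HP_mul_HP (a b : ℕ) :
    (∫ x : ℝ, (HP a).eval x * ((HP b).eval x * Real.exp (-(x ^ 2 / 2))))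
      = if a = b then ((Nat.factorial a) : ℝ) * Real.sqrt (2 * π) else 0 := by
  -- first the case a ≤ b
  have key : ∀ a b : ℕ, a ≤ b →
      (∫ x : ℝ, (HP a).eval x * ((HP b).eval x * Real.exp (-(x ^ 2 / 2))))
        = if a = b then ((Nat.factorial a) : ℝ) * Real.sqrt (2 * π) else 0 := by
    intro a b hab
    rw [integral_poly_mul_HP_gaussian b (HP a)]
    rcases eq_or_lt_of_le hab with rfl | hlt
    · rw [if_pos rfl, iterate_derivative_HP_self]
      simp only [Polynomial.eval_C]
      rw [MeasureTheory.integral_const_mul, integral_gaussian_half]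
    · rw [if_neg hlt.ne]
      rw [Polynomial.iterate_derivative_eq_zero (by rw [HP_natDegree]; exact hlt)]
      simp
  rcases le_total a b with hab | hba
  · exact key a b hab
  · have := key b a hba
    have hcomm : (∫ x : ℝ, (HP a).eval x * ((HP b).eval x * Real.exp (-(x ^ 2 / 2))))
        = ∫ x : ℝ, (HP b).eval x * ((HP a).eval x * Real.exp (-(x ^ 2 / 2))) := by
      congr 1; ext x; ring
    rw [hcomm, this]
    rcases eq_or_ne a b with rfl | hne
    · simp
    · rw [if_neg (Ne.symm hne), if_neg hne]






noncomputable def sgn {n : ℕ} (σ : Equiv.Perm (Fin n)) : ℝ := ((Equiv.Perm.sign σ : ℤ) : ℝ)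

lemma sgn_mul_self {n : ℕ} (σ : Equiv.Perm (Fin n)) : sgn σ * sgn σ = 1 := by
  rw [sgn, ← Int.cast_mul, ← Units.val_mul, Int.units_mul_self]
  simp

lemma vandermonde_sq_eq (n : ℕ) (x : Fin n → ℝ) :
    (vandermonde x) ^ 2
      = (∑ σ : Equiv.Perm (Fin n), sgn σ * ∏ i, (HP (σ i : ℕ)).eval (x i)) ^ 2 := by
  have h1 : Matrix.det (Matrix.vandermonde x)
      = ∑ σ : Equiv.Perm (Fin n), sgn σ * ∏ i, (HP (σ i : ℕ)).eval (x i) := by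
    rw [Matrix.det_eval_matrixOfPolynomials_eq_det_vandermonde x (fun j => HP (j : ℕ))
      (fun i => HP_natDegree i) (fun i => HP_monic i)]
    rw [← Matrix.det_transpose, Matrix.det_apply']
    refine Finset.sum_congr rfl fun σ _ => ?_
    simp [sgn, Matrix.transpose_apply]
  have h2 : vandermonde x = (∏ i : Fin n, ∏ j ∈ Finset.Ioi i, (-1 : ℝ))
      * Matrix.det (Matrix.vandermonde x) := by
    rw [Matrix.det_vandermonde, vandermonde, ← Finset.prod_mul_distrib]
    refine Finset.prod_congr rfl fun i _ => ?_
    rw [← Finset.prod_mul_distrib]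
    refine Finset.prod_congr rfl fun j _ => ?_
    ring
  rw [h2, ← h1, mul_pow]
  have : (∏ i : Fin n, ∏ j ∈ Finset.Ioi i, (-1 : ℝ)) ^ 2 = 1 := by
    rw [← Finset.prod_pow]
    refine Finset.prod_eq_one fun i _ => ?_
    rw [← Finset.prod_pow]
    exact Finset.prod_eq_one fun j _ => by norm_num
  rw [this, one_mul]

lemma expand_integrand (n : ℕ) (x : Fin n → ℝ) :
    (vandermonde x) ^ 2 * ∏ i, Real.exp (-((x i) ^ 2 / 2))
      = ∑ σ : Equiv.Perm (Fin n), ∑ τ : Equiv.Perm (Fin n), (sgn σ * sgn τ) *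
          ∏ i, ((HP (σ i : ℕ)).eval (x i) *
            ((HP (τ i : ℕ)).eval (x i) * Real.exp (-((x i) ^ 2 / 2)))) := by
  rw [vandermonde_sq_eq, sq, Finset.sum_mul_sum, Finset.sum_mul]
  refine Finset.sum_congr rfl fun σ _ => ?_
  rw [Finset.sum_mul]
  refine Finset.sum_congr rfl fun τ _ => ?_
  rw [Finset.prod_mul_distrib, Finset.prod_mul_distrib]
  ring

lemma integrable_1d (a b : ℕ) :
    Integrable fun y : ℝ => (HP a).eval y * ((HP b).eval y * Real.exp (-(y ^ 2 / 2))) := by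
  refine (integrable_poly_gaussian (HP a * HP b)).congr
    (Filter.Eventually.of_forall fun y => ?_)
  simp [eval_mul, mul_assoc]

lemma integrable_term (n : ℕ) (σ τ : Equiv.Perm (Fin n)) :
    Integrable fun x : Fin n → ℝ => (sgn σ * sgn τ) *
        ∏ i, ((HP (σ i : ℕ)).eval (x i) *
          ((HP (τ i : ℕ)).eval (x i) * Real.exp (-((x i) ^ 2 / 2)))) := by
  exact (Integrable.fintype_prod (f := fun (i : Fin n) (y : ℝ) =>
    (HP (σ i : ℕ)).eval y * ((HP (τ i : ℕ)).eval y * Real.exp (-(y ^ 2 / 2))))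
    (fun i => integrable_1d _ _)).const_mul _

lemma integrable_vdm_gaussian (n : ℕ) :
    Integrable fun x : Fin n → ℝ =>
      (vandermonde x) ^ 2 * ∏ i, Real.exp (-((x i) ^ 2 / 2)) := by
  have : (fun x : Fin n → ℝ => (vandermonde x) ^ 2 * ∏ i, Real.exp (-((x i) ^ 2 / 2)))
      = fun x => ∑ σ : Equiv.Perm (Fin n), ∑ τ : Equiv.Perm (Fin n), (sgn σ * sgn τ) *
          ∏ i, ((HP (σ i : ℕ)).eval (x i) *
            ((HP (τ i : ℕ)).eval (x i) * Real.exp (-((x i) ^ 2 / 2)))) :=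
    funext (expand_integrand n)
  rw [this]
  exact integrable_finset_sum _ fun σ _ => integrable_finset_sum _ fun τ _ => integrable_term n σ τ

lemma mehta (n : ℕ) :
    (∫ x : Fin n → ℝ, (vandermonde x) ^ 2 * ∏ i, Real.exp (-((x i) ^ 2 / 2)))
      = (Nat.factorial n : ℝ) * Real.sqrt (2 * π) ^ n
          * ∏ j : Fin n, ((Nat.factorial (j : ℕ)) : ℝ) := by
  have : (fun x : Fin n → ℝ => (vandermonde x) ^ 2 * ∏ i, Real.exp (-((x i) ^ 2 / 2)))
      = fun x => ∑ σ : Equiv.Perm (Fin n), ∑ τ : Equiv.Perm (Fin n), (sgn σ * sgn τ) *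
          ∏ i, ((HP (σ i : ℕ)).eval (x i) *
            ((HP (τ i : ℕ)).eval (x i) * Real.exp (-((x i) ^ 2 / 2)))) :=
    funext (expand_integrand n)
  rw [this, integral_finset_sum _ fun σ _ =>
    integrable_finset_sum _ fun τ _ => integrable_term n σ τ]
  have hterm : ∀ σ τ : Equiv.Perm (Fin n),
      (∫ x : Fin n → ℝ, (sgn σ * sgn τ) *
        ∏ i, ((HP (σ i : ℕ)).eval (x i) *
          ((HP (τ i : ℕ)).eval (x i) * Real.exp (-((x i) ^ 2 / 2)))))
      = (sgn σ * sgn τ) * ∏ i : Fin n,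
          (if (σ i : ℕ) = (τ i : ℕ) then ((Nat.factorial (σ i : ℕ)) : ℝ) * Real.sqrt (2 * π)
            else 0) := by
    intro σ τ
    rw [MeasureTheory.integral_const_mul]
    congr 1
    rw [MeasureTheory.integral_fintype_prod_volume_eq_prod (𝕜 := ℝ)
      (fun i y => (HP (σ i : ℕ)).eval y * ((HP (τ i : ℕ)).eval y * Real.exp (-(y ^ 2 / 2))))]
    exact Finset.prod_congr rfl fun i _ => integral_HP_mul_HP _ _
  simp_rw [integral_finset_sum _ fun τ _ => integrable_term n _ τ, hterm]
  have hinner : ∀ σ : Equiv.Perm (Fin n),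
      (∑ τ : Equiv.Perm (Fin n), (sgn σ * sgn τ) * ∏ i : Fin n,
          (if (σ i : ℕ) = (τ i : ℕ) then ((Nat.factorial (σ i : ℕ)) : ℝ) * Real.sqrt (2 * π)
            else 0))
      = Real.sqrt (2 * π) ^ n * ∏ j : Fin n, ((Nat.factorial (j : ℕ)) : ℝ) := by
    intro σ
    rw [Finset.sum_eq_single σ]
    · rw [sgn_mul_self, one_mul]
      simp only [eq_self_iff_true, if_true]
      rw [Finset.prod_mul_distrib, Finset.prod_const, Finset.card_univ, Fintype.card_fin,
        Equiv.prod_comp σ (fun j : Fin n => ((Nat.factorial (j : ℕ)) : ℝ)), mul_comm]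
    · intro τ _ hτ
      obtain ⟨i, hi⟩ := Function.ne_iff.mp (fun h => hτ (Equiv.ext (congrFun h)))
      refine mul_eq_zero_of_right _ (Finset.prod_eq_zero (Finset.mem_univ i) ?_)
      rw [if_neg (fun h => hi (Fin.val_injective h).symm)]
    · intro h; exact absurd (Finset.mem_univ σ) h
  simp_rw [hinner]
  rw [Finset.sum_const, Finset.card_univ]
  have : Fintype.card (Equiv.Perm (Fin n)) = Nat.factorial n := by
    rw [Fintype.card_perm, Fintype.card_fin]
  rw [this, nsmul_eq_mul]
  ring




section Ball
variable {n : ℕ}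

lemma vdm_continuous : Continuous (vandermonde (n := n)) := by
  unfold vandermonde
  exact continuous_finset_prod _ fun i _ => continuous_finset_prod _ fun j _ =>
    ((continuous_apply i).sub (continuous_apply j) : Continuous fun x : Fin n → ℝ => x i - x j)

lemma sum_sq_continuous : Continuous fun x : Fin n → ℝ => ∑ i, (x i) ^ 2 :=
  continuous_finset_sum _ fun i _ => (continuous_apply i).pow 2

lemma measurableSet_ball_sum (c : ℝ) : MeasurableSet {x : Fin n → ℝ | ∑ i, (x i) ^ 2 ≤ c} :=
  measurableSet_le sum_sq_continuous.measurable measurable_const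

lemma isCompact_ball_sum (c : ℝ) : IsCompact {x : Fin n → ℝ | ∑ i, (x i) ^ 2 ≤ c} := by
  refine Metric.isCompact_of_isClosed_isBounded
    (isClosed_le sum_sq_continuous continuous_const) ?_
  refine isBounded_iff_forall_norm_le.mpr ⟨Real.sqrt (max c 0), fun x hx => ?_⟩
  rw [pi_norm_le_iff_of_nonneg (Real.sqrt_nonneg _)]
  intro i
  rw [Real.norm_eq_abs, ← Real.sqrt_sq_eq_abs]
  refine Real.sqrt_le_sqrt ?_
  refine le_trans (le_trans (Finset.single_le_sum (f := fun i => (x i) ^ 2)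
    (fun j _ => sq_nonneg _) (Finset.mem_univ i)) hx) (le_max_left _ _)

lemma integrableOn_vdm_ball (c : ℝ) :
    IntegrableOn (fun x : Fin n → ℝ => (vandermonde x) ^ 2)
      {x : Fin n → ℝ | ∑ i, (x i) ^ 2 ≤ c} :=
  ((vdm_continuous.pow 2).continuousOn).integrableOn_compact (isCompact_ball_sum c)

lemma vdm_homog_count : (∑ i : Fin n, (Finset.Ioi i).card) * 2 + n = n * n := by
  have h1 : ∑ i : Fin n, (Finset.Ioi i).card = ∑ i ∈ Finset.range n, (n - 1 - i) := by
    rw [← Fin.sum_univ_eq_sum_range fun i => n - 1 - i]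
    refine Finset.sum_congr rfl fun i _ => ?_
    exact Fin.card_Ioi i
  have h2 : ∑ i ∈ Finset.range n, (n - 1 - i) = ∑ i ∈ Finset.range n, i :=
    Finset.sum_range_reflect (fun j => j) n
  have h3 : (∑ i ∈ Finset.range n, i) * 2 = n * (n - 1) := Finset.sum_range_id_mul_two n
  have h4 : n * (n - 1) + n = n * n := by
    cases n with
    | zero => rfl
    | succ m => simp [Nat.succ_sub_one]; ring
  omega

end Ball

section Scale
variable {n : ℕ}

lemma vdm_smul (r : ℝ) (x : Fin n → ℝ) :
    vandermonde (r • x) = (r ^ (∑ i : Fin n, (Finset.Ioi i).card)) * vandermonde x := by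
  unfold vandermonde
  rw [← Finset.prod_pow_eq_pow_sum, ← Finset.prod_mul_distrib]
  refine Finset.prod_congr rfl fun i _ => ?_
  rw [← Finset.prod_const, ← Finset.prod_mul_distrib]
  refine Finset.prod_congr rfl fun j _ => ?_
  simp only [Pi.smul_apply, smul_eq_mul]
  ring

lemma scale {r : ℝ} (hr : 0 < r) :
    (∫ x in {x : Fin n → ℝ | ∑ i, (x i) ^ 2 ≤ r ^ 2}, (vandermonde x) ^ 2)
      = r ^ (n * n) * ∫ x in {x : Fin n → ℝ | ∑ i, (x i) ^ 2 ≤ 1}, (vandermonde x) ^ 2 := by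
  set K := ∑ i : Fin n, (Finset.Ioi i).card with hK
  set V : (Fin n → ℝ) → ℝ := fun x => (vandermonde x) ^ 2 with hV
  set f : (Fin n → ℝ) → ℝ :=
    Set.indicator {x : Fin n → ℝ | ∑ i, (x i) ^ 2 ≤ r ^ 2} V with hf
  have key := MeasureTheory.Measure.integral_comp_smul (volume : Measure (Fin n → ℝ)) f r
  have hfr : ∀ x : Fin n → ℝ, f (r • x)
      = (r ^ K) ^ 2 * Set.indicator {x : Fin n → ℝ | ∑ i, (x i) ^ 2 ≤ 1} V x := by
    intro x
    rw [hf]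
    have hsum : ∑ i, ((r • x) i) ^ 2 = r ^ 2 * ∑ i, (x i) ^ 2 := by
      simp [Pi.smul_apply, smul_eq_mul, mul_pow, Finset.mul_sum]
    by_cases hx : ∑ i, (x i) ^ 2 ≤ 1
    · rw [Set.indicator_of_mem (s := {x : Fin n → ℝ | ∑ i, (x i) ^ 2 ≤ r ^ 2}) ?_ V,
        Set.indicator_of_mem (show x ∈ {x : Fin n → ℝ | ∑ i, (x i) ^ 2 ≤ 1} from hx) V]
      · rw [hV]
        simp only []
        rw [vdm_smul, mul_pow, ← hK]
      · rw [Set.mem_setOf_eq, hsum]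
        calc r ^ 2 * ∑ i, (x i) ^ 2 ≤ r ^ 2 * 1 := by
              refine mul_le_mul_of_nonneg_left hx (by positivity)
          _ = r ^ 2 := mul_one _
    · rw [Set.indicator_of_notMem (s := {x : Fin n → ℝ | ∑ i, (x i) ^ 2 ≤ r ^ 2}) ?_ V,
        Set.indicator_of_notMem (show x ∉ {x : Fin n → ℝ | ∑ i, (x i) ^ 2 ≤ 1} from hx) V, mul_zero]
      rw [Set.mem_setOf_eq, hsum]
      intro hcon
      have hr2 : (0:ℝ) < r ^ 2 := by positivity
      have h3 : r ^ 2 * 1 < r ^ 2 * ∑ i, (x i) ^ 2 :=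
        mul_lt_mul_of_pos_left (lt_of_not_ge hx) hr2
      nlinarith
  have hfin : Module.finrank ℝ (Fin n → ℝ) = n := by
    simp [Module.finrank_fin_fun]
  rw [hfin] at key
  simp only [hfr] at key
  rw [MeasureTheory.integral_const_mul, MeasureTheory.integral_indicator
    (measurableSet_ball_sum 1), abs_of_pos (show (0:ℝ) < (r ^ n)⁻¹ by positivity),
    smul_eq_mul] at key
  rw [← MeasureTheory.integral_indicator (measurableSet_ball_sum (r ^ 2)), ← hf]
  have hrn : (0:ℝ) < r ^ n := by positivity
  have h2 : (∫ x, f x) = r ^ n * ((r ^ K) ^ 2 *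
      ∫ x in {x : Fin n → ℝ | ∑ i, (x i) ^ 2 ≤ 1}, V x) := by
    rw [key, ← mul_assoc, mul_inv_cancel₀ hrn.ne', one_mul]
  rw [h2, ← mul_assoc, ← pow_mul, ← pow_add]
  congr 2
  have := vdm_homog_count (n := n)
  omega

end Scale








section LayerCake
variable (n : ℕ)

lemma exp_prod_eq (x : Fin n → ℝ) :
    (∏ i, Real.exp (-((x i) ^ 2 / 2))) = Real.exp (-(∑ i, (x i) ^ 2) / 2) := by
  rw [← Real.exp_sum]
  congr 1
  simp only [neg_div, Finset.sum_div, Finset.sum_neg_distrib]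

lemma lintegral_exp_neg_Ioi (a : ℝ) :
    (∫⁻ t in Set.Ioi a, ENNReal.ofReal (Real.exp (-t))) = ENNReal.ofReal (Real.exp (-a)) := by
  have hint : IntegrableOn (fun t : ℝ => Real.exp (-t)) (Set.Ioi a) := by
    have := exp_neg_integrableOn_Ioi a (one_pos)
    simpa using this
  rw [← MeasureTheory.ofReal_integral_eq_lintegral_ofReal hint
    (Filter.Eventually.of_forall fun t => (Real.exp_pos _).le), integral_exp_neg_Ioi]

lemma pointwise_layer (x : Fin n → ℝ) :
    ENNReal.ofReal ((vandermonde x) ^ 2 * Real.exp (-(∑ i, (x i) ^ 2) / 2))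
      = ∫⁻ t in Set.Ioi (0:ℝ),
          Set.indicator {t : ℝ | ∑ i, (x i) ^ 2 ≤ 2 * t}
            (fun t => ENNReal.ofReal ((vandermonde x) ^ 2) * ENNReal.ofReal (Real.exp (-t))) t := by
  set s : ℝ := ∑ i, (x i) ^ 2 with hs
  have hs0 : 0 ≤ s := Finset.sum_nonneg fun i _ => sq_nonneg _
  have hset : {t : ℝ | s ≤ 2 * t} = Set.Ici (s / 2) := by
    ext t; simp only [Set.mem_setOf_eq, Set.mem_Ici]; constructor <;> intro h <;> linarith
  rw [hset, lintegral_indicator measurableSet_Ici, Measure.restrict_restrict measurableSet_Ici]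
  have hae : (Set.Ici (s / 2) ∩ Set.Ioi 0 : Set ℝ) =ᵐ[volume] (Set.Ioi (s / 2) : Set ℝ) := by
    rw [Filter.eventuallyEq_set]
    have h1 : ∀ t : ℝ, t ≠ s / 2 →
        (t ∈ Set.Ici (s / 2) ∩ Set.Ioi 0 ↔ t ∈ Set.Ioi (s / 2)) := by
      intro t ht
      simp only [Set.mem_inter_iff, Set.mem_Ici, Set.mem_Ioi]
      constructor
      · rintro ⟨h2, h3⟩; rcases lt_or_eq_of_le h2 with h | h
        · exact h
        · exact absurd h.symm ht
      · intro h; constructor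
        · exact h.le
        · have : 0 ≤ s / 2 := by linarith
          linarith
    have : {t : ℝ | t ≠ s / 2} ∈ ae (volume : Measure ℝ) := by
      rw [mem_ae_iff]
      refine measure_mono_null ?_ (volume_singleton (a := s / 2))
      intro t ht
      simp only [Set.mem_compl_iff, Set.mem_setOf_eq, not_not] at ht
      simpa using ht
    filter_upwards [this] with t ht using h1 t ht
  rw [setLIntegral_congr hae, lintegral_const_mul _
    ((measurable_neg.exp).ennreal_ofReal), lintegral_exp_neg_Ioi,
    ← ENNReal.ofReal_mul (sq_nonneg _), neg_div]

end LayerCake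

noncomputable def gfun (n : ℕ) : ((Fin n → ℝ) × ℝ) → ENNReal := fun p =>
  Set.indicator {p : (Fin n → ℝ) × ℝ | ∑ i, (p.1 i) ^ 2 ≤ 2 * p.2}
    (fun p => ENNReal.ofReal ((vandermonde p.1) ^ 2) * ENNReal.ofReal (Real.exp (-p.2))) p

lemma gfun_measurable (n : ℕ) : Measurable (gfun n) := by
  refine Measurable.indicator ?_ ?_
  · exact (((vdm_continuous.pow 2).measurable).comp measurable_fst).ennreal_ofReal.mul
      ((measurable_snd.neg.exp).ennreal_ofReal)
  · exact measurableSet_le ((sum_sq_continuous.measurable).comp measurable_fst)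
      (measurable_const.mul measurable_snd)

lemma gfun_eq (n : ℕ) (x : Fin n → ℝ) (t : ℝ) :
    Set.indicator {t : ℝ | ∑ i, (x i) ^ 2 ≤ 2 * t}
      (fun t => ENNReal.ofReal ((vandermonde x) ^ 2) * ENNReal.ofReal (Real.exp (-t))) t
    = gfun n (x, t) := by
  by_cases h : ∑ i, (x i) ^ 2 ≤ 2 * t <;>
    simp [gfun, Set.indicator_apply, Set.mem_setOf_eq, h]

lemma inner_eval (n : ℕ) {t : ℝ} (ht : t ∈ Set.Ioi (0:ℝ)) :
    (∫⁻ x : Fin n → ℝ, gfun n (x, t))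
      = ENNReal.ofReal (Real.exp (-t) * (Real.sqrt (2 * t) ^ (n * n) *
          ∫ x in {x : Fin n → ℝ | ∑ i, (x i) ^ 2 ≤ 1}, (vandermonde x) ^ 2)) := by
  have ht' : (0:ℝ) < t := ht
  have h1 : ∀ x : Fin n → ℝ, gfun n (x, t)
      = Set.indicator {x : Fin n → ℝ | ∑ i, (x i) ^ 2 ≤ 2 * t}
          (fun x => ENNReal.ofReal ((vandermonde x) ^ 2)) x * ENNReal.ofReal (Real.exp (-t)) := by
    intro x
    by_cases h : ∑ i, (x i) ^ 2 ≤ 2 * t <;>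
      simp [gfun, Set.indicator_apply, Set.mem_setOf_eq, h]
  simp_rw [h1]
  rw [lintegral_mul_const _ (Measurable.indicator
    (show Measurable fun x : Fin n → ℝ => ENNReal.ofReal ((vandermonde x) ^ 2) from (vdm_continuous.pow 2).measurable.ennreal_ofReal) (measurableSet_ball_sum _)),
    lintegral_indicator (measurableSet_ball_sum _)]
  have h2 : (∫⁻ x in {x : Fin n → ℝ | ∑ i, (x i) ^ 2 ≤ 2 * t},
        ENNReal.ofReal ((vandermonde x) ^ 2))
      = ENNReal.ofReal (∫ x in {x : Fin n → ℝ | ∑ i, (x i) ^ 2 ≤ 2 * t}, (vandermonde x) ^ 2) :=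
    (MeasureTheory.ofReal_integral_eq_lintegral_ofReal (integrableOn_vdm_ball _)
      (Filter.Eventually.of_forall fun x => sq_nonneg _)).symm
  rw [h2]
  have h3 : {x : Fin n → ℝ | ∑ i, (x i) ^ 2 ≤ 2 * t}
      = {x : Fin n → ℝ | ∑ i, (x i) ^ 2 ≤ (Real.sqrt (2 * t)) ^ 2} := by
    rw [Real.sq_sqrt (by linarith)]
  have hB0 : 0 ≤ ∫ x in {x : Fin n → ℝ | ∑ i, (x i) ^ 2 ≤ 1}, (vandermonde x) ^ 2 :=
    setIntegral_nonneg (measurableSet_ball_sum 1) fun x _ => sq_nonneg _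
  rw [h3, scale (Real.sqrt_pos.mpr (by linarith)),
    ← ENNReal.ofReal_mul (by positivity), mul_comm]

lemma gaussian_eq_ball (n : ℕ) :
    (∫ x : Fin n → ℝ, (vandermonde x) ^ 2 * ∏ i, Real.exp (-((x i) ^ 2 / 2)))
      = (2:ℝ) ^ (((n * n : ℕ) : ℝ) / 2) * Real.Gamma (((n * n : ℕ) : ℝ) / 2 + 1) *
          ∫ x in {x : Fin n → ℝ | ∑ i, (x i) ^ 2 ≤ 1}, (vandermonde x) ^ 2 := by
  set q : ℝ := ((n * n : ℕ) : ℝ) / 2 with hq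
  set B : ℝ := ∫ x in {x : Fin n → ℝ | ∑ i, (x i) ^ 2 ≤ 1}, (vandermonde x) ^ 2 with hB
  have hq0 : 0 ≤ q := by positivity
  have hB0 : 0 ≤ B := setIntegral_nonneg (measurableSet_ball_sum 1) fun x _ => sq_nonneg _
  have hΓ : 0 < Real.Gamma (q + 1) := Real.Gamma_pos_of_pos (by linarith)
  have hprod : (fun x : Fin n → ℝ => (vandermonde x) ^ 2 * ∏ i, Real.exp (-((x i) ^ 2 / 2)))
      = fun x => (vandermonde x) ^ 2 * Real.exp (-(∑ i, (x i) ^ 2) / 2) :=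
    funext fun x => by rw [exp_prod_eq]
  rw [hprod]
  have hInt : Integrable (fun x : Fin n → ℝ =>
      (vandermonde x) ^ 2 * Real.exp (-(∑ i, (x i) ^ 2) / 2)) := by
    have := integrable_vdm_gaussian n; rwa [hprod] at this
  have hG'0 : 0 ≤ ∫ x : Fin n → ℝ, (vandermonde x) ^ 2 * Real.exp (-(∑ i, (x i) ^ 2) / 2) :=
    integral_nonneg fun x => mul_nonneg (sq_nonneg _) (Real.exp_pos _).le
  -- pointwise identity on Ioi 0
  have hpt : ∀ t ∈ Set.Ioi (0:ℝ), Real.exp (-t) * (Real.sqrt (2 * t) ^ (n * n) * B)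
      = (2:ℝ) ^ q * B * (Real.exp (-t) * t ^ q) := by
    intro t ht
    have ht' : (0:ℝ) < t := ht
    have h2t : (0:ℝ) ≤ 2 * t := by linarith
    have hsq : Real.sqrt (2 * t) ^ (n * n) = (2:ℝ) ^ q * t ^ q := by
      rw [Real.sqrt_eq_rpow, ← Real.rpow_natCast ((2 * t) ^ (1/2 : ℝ)) (n * n),
        ← Real.rpow_mul h2t, show (1/2 : ℝ) * ((n * n : ℕ) : ℝ) = q by rw [hq]; ring,
        Real.mul_rpow (by norm_num) ht'.le]
    rw [hsq]; ring
  -- integrability of the radial profile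
  have hΓint : IntegrableOn (fun t : ℝ => Real.exp (-t) * t ^ q) (Set.Ioi (0:ℝ)) := by
    have h := Real.GammaIntegral_convergent (s := q + 1) (by linarith)
    simpa using h
  have hIntW : IntegrableOn
      (fun t : ℝ => Real.exp (-t) * (Real.sqrt (2 * t) ^ (n * n) * B)) (Set.Ioi (0:ℝ)) := by
    refine (hΓint.const_mul ((2:ℝ) ^ q * B)).congr ?_
    filter_upwards [ae_restrict_mem measurableSet_Ioi] with t ht
    exact (hpt t ht).symm
  -- value of the radial integral
  have hGamma : Real.Gamma (q + 1) = ∫ t in Set.Ioi (0:ℝ), Real.exp (-t) * t ^ q := by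
    have := Real.Gamma_eq_integral (s := q + 1) (by linarith)
    simpa using this
  have hW : (∫ t in Set.Ioi (0:ℝ), Real.exp (-t) * (Real.sqrt (2 * t) ^ (n * n) * B))
      = (2:ℝ) ^ q * B * Real.Gamma (q + 1) := by
    rw [setIntegral_congr_fun measurableSet_Ioi (fun t ht => hpt t ht),
      MeasureTheory.integral_const_mul, ← hGamma]
  -- the lintegral chain
  have hchain : ENNReal.ofReal
        (∫ x : Fin n → ℝ, (vandermonde x) ^ 2 * Real.exp (-(∑ i, (x i) ^ 2) / 2))
      = ENNReal.ofReal ((2:ℝ) ^ q * B * Real.Gamma (q + 1)) := by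
    rw [ofReal_integral_eq_lintegral_ofReal hInt
      (Filter.Eventually.of_forall fun x => mul_nonneg (sq_nonneg _) (Real.exp_pos _).le)]
    have hL2 : (∫⁻ x : Fin n → ℝ,
          ENNReal.ofReal ((vandermonde x) ^ 2 * Real.exp (-(∑ i, (x i) ^ 2) / 2)))
        = ∫⁻ x : Fin n → ℝ, ∫⁻ t in Set.Ioi (0:ℝ), gfun n (x, t) := by
      refine lintegral_congr fun x => ?_
      rw [pointwise_layer]
      exact lintegral_congr fun t => gfun_eq n x t
    rw [hL2]
    have hswap : (∫⁻ x : Fin n → ℝ, ∫⁻ t in Set.Ioi (0:ℝ), gfun n (x, t))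
        = ∫⁻ t in Set.Ioi (0:ℝ), ∫⁻ x : Fin n → ℝ, gfun n (x, t) := by
      exact lintegral_lintegral_swap
        (((gfun_measurable n).comp (measurable_fst.prodMk measurable_snd)).aemeasurable)
    rw [hswap]
    rw [setLIntegral_congr_fun measurableSet_Ioi
      (fun t ht => inner_eval n ht)]
    rw [← MeasureTheory.ofReal_integral_eq_lintegral_ofReal hIntW ?_, hW]
    filter_upwards [ae_restrict_mem measurableSet_Ioi] with t ht
    have ht' : (0:ℝ) < t := ht
    have : (0:ℝ) ≤ Real.sqrt (2 * t) ^ (n * n) * B := by positivity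
    positivity
  have heq := (ENNReal.ofReal_eq_ofReal_iff hG'0 (by positivity)).mp hchain
  rw [heq]; ring


lemma prod_Icc_factorial (n : ℕ) :
    (∏ j ∈ Finset.Icc 1 n, ((Nat.factorial j) : ℝ))
      = ((Nat.factorial n) : ℝ) * ∏ j ∈ Finset.range n, ((Nat.factorial j) : ℝ) := by
  induction n with
  | zero => simp
  | succ m ih =>
      rw [Finset.prod_Icc_succ_top (by omega), ih, Finset.prod_range_succ]
      ring

/-- **Vandermonde integral over the unit ball.** -/
theorem vandermonde_integral_unit_ball (n : ℕ) (hn : 0 < n) :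
    (∫ y in {y : Fin n → ℝ | ∑ j : Fin n, (y j) ^ 2 ≤ 1}, (vandermonde y) ^ 2) =
      1 / Real.Gamma ((n : ℝ) ^ 2 / 2 + 1) * (2 * π) ^ ((n : ℝ) / 2) *
        2 ^ (-((n : ℝ) ^ 2) / 2) * ∏ j ∈ Finset.Icc 1 n, Real.Gamma (1 + j) := by
  have key := gaussian_eq_ball n
  rw [mehta n] at key
  have hq : ((n * n : ℕ) : ℝ) / 2 = (n : ℝ) ^ 2 / 2 := by push_cast; ring
  rw [hq] at key
  have hsqrt : Real.sqrt (2 * π) ^ n = (2 * π) ^ ((n : ℝ) / 2) := by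
    rw [Real.sqrt_eq_rpow, ← Real.rpow_natCast ((2 * π) ^ (1/2 : ℝ)) n,
      ← Real.rpow_mul (by positivity)]
    congr 1; ring
  rw [hsqrt, Fin.prod_univ_eq_prod_range (fun j => ((Nat.factorial j) : ℝ)) n] at key
  have hGprod : (∏ j ∈ Finset.Icc 1 n, Real.Gamma (1 + j))
      = ((Nat.factorial n) : ℝ) * ∏ j ∈ Finset.range n, ((Nat.factorial j) : ℝ) := by
    rw [← prod_Icc_factorial]
    refine Finset.prod_congr rfl fun j _ => ?_
    rw [add_comm (1:ℝ) (j:ℝ)]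
    exact Real.Gamma_nat_eq_factorial j
  rw [hGprod]
  have hneg : (2:ℝ) ^ (-((n : ℝ) ^ 2) / 2) = ((2:ℝ) ^ ((n : ℝ) ^ 2 / 2))⁻¹ := by
    rw [neg_div, Real.rpow_neg (by norm_num)]
  rw [hneg]
  have h2q : (0:ℝ) < (2:ℝ) ^ ((n : ℝ) ^ 2 / 2) := Real.rpow_pos_of_pos (by norm_num) _
  have hΓ : 0 < Real.Gamma ((n : ℝ) ^ 2 / 2 + 1) := Real.Gamma_pos_of_pos (by positivity)
  have hBeq : (∫ y in {y : Fin n → ℝ | ∑ j : Fin n, (y j) ^ 2 ≤ 1}, (vandermonde y) ^ 2)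
      = (((Nat.factorial n) : ℝ) * (2 * π) ^ ((n : ℝ) / 2) *
          ∏ j ∈ Finset.range n, ((Nat.factorial j) : ℝ)) /
        ((2:ℝ) ^ ((n : ℝ) ^ 2 / 2) * Real.Gamma ((n : ℝ) ^ 2 / 2 + 1)) := by
    rw [eq_div_iff (by positivity)]
    linear_combination -key
  rw [hBeq, div_eq_mul_inv, mul_inv]
  ring
end

section
/- (Concentration of the radial weight) For every real α with 0 < α < 1 and every m > 0, there exists N₀ such that for all N ≥ N₀: 1 - N^{-m} ≤ [∫_{N/√2 - N^α}^{N/√2 + N^α} e^{-r²} r^{N²-2} dr] / [∫_0^∞ e^{-r²} r^{N²-2} dr] ≤ 1. -/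
open MeasureTheory Real Set

lemma pt_ub {k : ℕ} {ρ r : ℝ} (hρ : 0 < ρ) (hr : 0 < r) (hk : (k:ℝ) = 2 * ρ^2) :
    Real.exp (-r^2) * r^k ≤ Real.exp (-ρ^2) * ρ^k * Real.exp (-(r-ρ)^2) := by
  have h1 : Real.log (r/ρ) ≤ r/ρ - 1 := Real.log_le_sub_one_of_pos (by positivity)
  have hld : Real.log (r/ρ) = Real.log r - Real.log ρ := Real.log_div hr.ne' hρ.ne'
  have hrk : (r:ℝ)^k = Real.exp ((k:ℝ) * Real.log r) := by
    rw [← Real.log_pow, Real.exp_log (by positivity)]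
  have hρk : (ρ:ℝ)^k = Real.exp ((k:ℝ) * Real.log ρ) := by
    rw [← Real.log_pow, Real.exp_log (by positivity)]
  have key : 2*ρ^2*(Real.log r - Real.log ρ) ≤ 2*ρ*(r-ρ) := by
    have h := mul_le_mul_of_nonneg_left h1 (show (0:ℝ) ≤ 2*ρ^2 by positivity)
    rw [hld] at h
    have e : 2*ρ^2*(r/ρ-1) = 2*ρ*(r-ρ) := by field_simp
    linarith
  rw [hrk, hρk, ← Real.exp_add, ← Real.exp_add, ← Real.exp_add, Real.exp_le_exp, hk]
  nlinarith [key]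

lemma pt_lb {k : ℕ} {ρ r : ℝ} (hρ : 0 < ρ) (hk : (k:ℝ) = 2 * ρ^2)
    (h1 : ρ ≤ r) (h2 : r ≤ ρ + 1) :
    Real.exp (-ρ^2) * ρ^k * Real.exp (-3) ≤ Real.exp (-r^2) * r^k := by
  have hr : 0 < r := lt_of_lt_of_le hρ h1
  have hl : Real.log (ρ/r) ≤ ρ/r - 1 := Real.log_le_sub_one_of_pos (by positivity)
  have hld : Real.log (ρ/r) = Real.log ρ - Real.log r := Real.log_div hρ.ne' hr.ne'
  have hrk : (r:ℝ)^k = Real.exp ((k:ℝ) * Real.log r) := by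
    rw [← Real.log_pow, Real.exp_log (by positivity)]
  have hρk : (ρ:ℝ)^k = Real.exp ((k:ℝ) * Real.log ρ) := by
    rw [← Real.log_pow, Real.exp_log (by positivity)]
  have K : 2*ρ^2*(Real.log ρ - Real.log r)*r ≤ 2*ρ^2*(ρ - r) := by
    have h := mul_le_mul_of_nonneg_left hl (show (0:ℝ) ≤ 2*ρ^2*r by positivity)
    rw [hld] at h
    have e : 2*ρ^2*r*(ρ/r-1) = 2*ρ^2*(ρ-r) := by field_simp
    nlinarith [h]
  have hB : (r - ρ)^2 ≤ 1 := by nlinarith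
  have T : (r-ρ)^2*(r+2*ρ) ≤ 3*r := by nlinarith
  rw [hrk, hρk, ← Real.exp_add, ← Real.exp_add, ← Real.exp_add, Real.exp_le_exp, hk]
  nlinarith [K, T, hr]

lemma integrableOn_f (k : ℕ) :
    IntegrableOn (fun r : ℝ => Real.exp (-r^2) * r^k) (Set.Ioi 0) := by
  have h := integrableOn_rpow_mul_exp_neg_mul_sq (b := 1) one_pos
    (s := (k:ℝ)) (lt_of_lt_of_le neg_one_lt_zero (Nat.cast_nonneg k))
  refine h.congr_fun (fun x hx => ?_) measurableSet_Ioi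
  simp only [Real.rpow_natCast]
  ring_nf

lemma right_tail {k : ℕ} {ρ b : ℝ} (hρ : 0 < ρ) (hk : (k:ℝ) = 2 * ρ^2) (hc : 1 ≤ b - ρ) :
    ∫ r in Set.Ioi b, Real.exp (-r^2) * r^k ≤
      Real.exp (-ρ^2) * ρ^k * Real.exp (-(b-ρ)^2) := by
  have hb : 0 < b := by linarith
  set C := Real.exp (-ρ^2) * ρ^k * Real.exp (-(b-ρ)^2) with hC
  have hCpos : 0 < C := by positivity
  have hint : IntegrableOn (fun r => C * Real.exp b * Real.exp (-r)) (Set.Ioi b) := by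
    have h := exp_neg_integrableOn_Ioi b (one_pos (α := ℝ))
    simp only [neg_one_mul] at h
    exact h.const_mul _
  have step : ∀ r ∈ Set.Ioi b, Real.exp (-r^2) * r^k ≤ C * Real.exp b * Real.exp (-r) := by
    intro r hr
    have hr' : b < r := hr
    have h1 := pt_ub hρ (by linarith : (0:ℝ) < r) hk
    have h2 : Real.exp (-(r-ρ)^2) ≤ Real.exp (-(b-ρ)^2) * (Real.exp b * Real.exp (-r)) := by
      rw [← Real.exp_add, ← Real.exp_add, Real.exp_le_exp]
      nlinarith [hr'.le]
    calc Real.exp (-r^2) * r^k ≤ Real.exp (-ρ^2) * ρ^k * Real.exp (-(r-ρ)^2) := h1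
      _ ≤ Real.exp (-ρ^2) * ρ^k * (Real.exp (-(b-ρ)^2) * (Real.exp b * Real.exp (-r))) := by
          exact mul_le_mul_of_nonneg_left h2 (by positivity)
      _ = C * Real.exp b * Real.exp (-r) := by rw [hC]; ring
  calc ∫ r in Set.Ioi b, Real.exp (-r^2) * r^k
      ≤ ∫ r in Set.Ioi b, C * Real.exp b * Real.exp (-r) :=
        setIntegral_mono_on ((integrableOn_f k).mono_set
          (Set.Ioi_subset_Ioi hb.le)) hint measurableSet_Ioi step
    _ = C * Real.exp b * Real.exp (-b) := by
        rw [MeasureTheory.integral_const_mul, integral_exp_neg_Ioi]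
    _ = C := by rw [mul_assoc, ← Real.exp_add]; simp

lemma left_tail {k : ℕ} {ρ a : ℝ} (hρ : 0 < ρ) (hk : (k:ℝ) = 2 * ρ^2)
    (ha : 0 ≤ a) (hle : a ≤ ρ) :
    ∫ r in Set.Ioc 0 a, Real.exp (-r^2) * r^k ≤
      a * (Real.exp (-ρ^2) * ρ^k * Real.exp (-(a-ρ)^2)) := by
  set C := Real.exp (-ρ^2) * ρ^k * Real.exp (-(a-ρ)^2) with hC
  have step : ∀ r ∈ Set.Ioc 0 a, Real.exp (-r^2) * r^k ≤ C := by
    intro r hr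
    have h1 := pt_ub hρ hr.1 hk
    have h2 : Real.exp (-(r-ρ)^2) ≤ Real.exp (-(a-ρ)^2) := by
      rw [Real.exp_le_exp]
      nlinarith [hr.2]
    calc Real.exp (-r^2) * r^k ≤ Real.exp (-ρ^2) * ρ^k * Real.exp (-(r-ρ)^2) := h1
      _ ≤ C := mul_le_mul_of_nonneg_left h2 (by positivity)
  calc ∫ r in Set.Ioc 0 a, Real.exp (-r^2) * r^k
      ≤ ∫ _ in Set.Ioc 0 a, C :=
        setIntegral_mono_on ((integrableOn_f k).mono_set
          (fun x hx => hx.1)) (integrableOn_const (by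
            rw [Real.volume_Ioc]; exact ENNReal.ofReal_ne_top))
          measurableSet_Ioc step
    _ = a * C := by
        rw [setIntegral_const, Real.volume_real_Ioc_of_le ha, smul_eq_mul]
        ring_nf
    _ = a * C := rfl

lemma total_lb {k : ℕ} {ρ : ℝ} (hρ : 0 < ρ) (hk : (k:ℝ) = 2 * ρ^2) :
    Real.exp (-ρ^2) * ρ^k * Real.exp (-3) ≤
      ∫ r in Set.Ioi (0:ℝ), Real.exp (-r^2) * r^k := by
  have hsub : Set.Icc ρ (ρ+1) ⊆ Set.Ioi (0:ℝ) := fun x hx => lt_of_lt_of_le hρ hx.1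
  have h1 : ∫ r in Set.Icc ρ (ρ+1), Real.exp (-r^2) * r^k ≤
      ∫ r in Set.Ioi (0:ℝ), Real.exp (-r^2) * r^k := by
    apply setIntegral_mono_set (integrableOn_f k) ?_ (HasSubset.Subset.eventuallyLE hsub)
    filter_upwards [ae_restrict_mem measurableSet_Ioi] with x hx
    have : (0:ℝ) < x := hx
    positivity
  have h2 : Real.exp (-ρ^2) * ρ^k * Real.exp (-3) * 1 ≤
      ∫ r in Set.Icc ρ (ρ+1), Real.exp (-r^2) * r^k := by
    have := setIntegral_ge_of_const_le (μ := volume) (c := Real.exp (-ρ^2) * ρ^k * Real.exp (-3))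
      (f := fun r => Real.exp (-r^2) * r^k) measurableSet_Icc
      (by rw [Real.volume_Icc]; exact ENNReal.ofReal_ne_top)
      (fun x hx => pt_lb hρ hk hx.1 hx.2)
      ((integrableOn_f k).mono_set hsub)
    rw [Real.volume_real_Icc_of_le (by linarith)] at this
    simpa using this
  linarith [h2]

lemma eventual_rpow (β C : ℝ) (hβ : 0 < β) : ∃ N₀ : ℕ, ∀ N : ℕ, N₀ ≤ N → C ≤ (N:ℝ)^β := by
  have h : Filter.Tendsto (fun N : ℕ => (N:ℝ)^β) Filter.atTop Filter.atTop :=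
    (tendsto_rpow_atTop hβ).comp tendsto_natCast_atTop_atTop
  exact Filter.eventually_atTop.mp (h.eventually_ge_atTop C)

lemma ratio_bounds {k : ℕ} {ρ a b ε : ℝ} (hρ0 : 0 < ρ) (hk : (k:ℝ) = 2 * ρ^2)
    (ha0 : 0 < a) (hab : a ≤ b) (haρ : a ≤ ρ) (hbρ : 1 ≤ b - ρ)
    (htl : a * Real.exp (-(a-ρ)^2) + Real.exp (-(b-ρ)^2) ≤ ε * Real.exp (-3)) :
    1 - ε ≤ (∫ r in Set.Icc a b, Real.exp (-r^2) * r^k) /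
        (∫ r in Set.Ioi (0:ℝ), Real.exp (-r^2) * r^k) ∧
      (∫ r in Set.Icc a b, Real.exp (-r^2) * r^k) /
        (∫ r in Set.Ioi (0:ℝ), Real.exp (-r^2) * r^k) ≤ 1 := by
  have hb0 : 0 < b := by linarith
  set f : ℝ → ℝ := fun r => Real.exp (-r^2) * r^k with hfdef
  have hfint : IntegrableOn f (Set.Ioi 0) := integrableOn_f k
  set T : ℝ := ∫ r in Set.Ioi (0:ℝ), f r with hTdef
  set I : ℝ := ∫ r in Set.Icc a b, f r with hIdef
  set L : ℝ := ∫ r in Set.Ioc 0 a, f r with hLdef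
  set M : ℝ := ∫ r in Set.Ioc a b, f r with hMdef
  set R : ℝ := ∫ r in Set.Ioi b, f r with hRdef
  have hIM : I = M := MeasureTheory.integral_Icc_eq_integral_Ioc
  have hintL : IntegrableOn f (Set.Ioc 0 a) := hfint.mono_set (fun y hy => hy.1)
  have hintM : IntegrableOn f (Set.Ioc a b) :=
    hfint.mono_set (fun y hy => lt_trans ha0 hy.1)
  have hintR : IntegrableOn f (Set.Ioi b) := hfint.mono_set (Set.Ioi_subset_Ioi hb0.le)
  have hsplit : T = L + M + R := by
    have h1 : ∫ r in Set.Ioc 0 a ∪ Set.Ioc a b, f r = L + M :=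
      MeasureTheory.setIntegral_union (Set.Ioc_disjoint_Ioc_of_le le_rfl) measurableSet_Ioc hintL hintM
    rw [Set.Ioc_union_Ioc_eq_Ioc ha0.le hab] at h1
    have h2 : ∫ r in Set.Ioc 0 b ∪ Set.Ioi b, f r = (L + M) + R := by
      rw [MeasureTheory.setIntegral_union Set.Ioc_disjoint_Ioi_same measurableSet_Ioi
        (hfint.mono_set (fun y hy => hy.1)) hintR, h1]
    rw [Set.Ioc_union_Ioi_eq_Ioi hb0.le] at h2
    rw [hTdef, h2]
  set F : ℝ := Real.exp (-ρ^2) * ρ^k with hFdef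
  have hF0 : 0 < F := by positivity
  have hT3 : F * Real.exp (-3) ≤ T := total_lb hρ0 hk
  have hTpos : 0 < T := lt_of_lt_of_le (by positivity) hT3
  have hR : R ≤ F * Real.exp (-(b-ρ)^2) := right_tail hρ0 hk hbρ
  have hL : L ≤ a * (F * Real.exp (-(a-ρ)^2)) := left_tail hρ0 hk ha0.le haρ
  have htail : L + R ≤ ε * T := by
    have h1 : L + R ≤ F * (a * Real.exp (-(a-ρ)^2) + Real.exp (-(b-ρ)^2)) := by
      nlinarith [hL, hR]
    have h2 : F * (a * Real.exp (-(a-ρ)^2) + Real.exp (-(b-ρ)^2)) ≤ F * (ε * Real.exp (-3)) :=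
      mul_le_mul_of_nonneg_left htl hF0.le
    have hε0 : 0 ≤ ε := by
      nlinarith [Real.exp_pos (-(3:ℝ)), Real.exp_pos (-(b-ρ)^2), Real.exp_pos (-(a-ρ)^2),
        mul_pos ha0 (Real.exp_pos (-(a-ρ)^2))]
    have h3 : F * (ε * Real.exp (-3)) = ε * (F * Real.exp (-3)) := by ring
    nlinarith [mul_le_mul_of_nonneg_left hT3 hε0]
  have hL0 : 0 ≤ L := MeasureTheory.setIntegral_nonneg measurableSet_Ioc
    (fun y hy => by have : 0 < y := hy.1; positivity)
  have hR0 : 0 ≤ R := MeasureTheory.setIntegral_nonneg measurableSet_Ioi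
    (fun y hy => by have : 0 < y := lt_trans hb0 hy; positivity)
  constructor
  · rw [le_div_iff₀ hTpos]
    nlinarith [hsplit, hIM, htail]
  · rw [div_le_one hTpos, hIM]
    linarith [hsplit]

lemma mu_rho_bounds {ρ μ : ℝ} (hρ : 0 < ρ) (hμ : 0 < μ) (h2 : μ^2 = ρ^2 + 1) :
    ρ ≤ μ ∧ μ ≤ ρ + 1 := by
  constructor <;> nlinarith

lemma exp_bd {t v : ℝ} (h3 : 3 ≤ t) (hv : t - 1 ≤ v) : Real.exp (-v^2) ≤ Real.exp (-t) := by
  rw [Real.exp_le_exp]; nlinarith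

lemma G_ineq {x m α : ℝ} (hα0 : 0 < α) (hm : 0 < m) (hx2 : 2 ≤ x)
    (hs : 2*(m+1)/α + 4 ≤ x^(α/2)) :
    (x+1) * Real.exp (-(x^α)) ≤ x^(-m) * Real.exp (-3) := by
  have hx0 : (0:ℝ) < x := by linarith
  set t : ℝ := x ^ α with htdef
  have hxm0 : 0 < x ^ m := Real.rpow_pos_of_pos hx0 m
  have key : (x+1) * x^m * Real.exp 3 ≤ Real.exp t := by
    have hlog : Real.log x ≤ (2/α) * x ^ (α/2) := by
      calc Real.log x ≤ x ^ (α/2) / (α/2) := Real.log_le_rpow_div hx0.le (half_pos hα0)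
        _ = (2/α) * x ^ (α/2) := by rw [div_div_eq_mul_div, div_eq_mul_one_div]; ring_nf
    set s : ℝ := x ^ (α/2) with hsdef
    have hKpos : 0 ≤ 2*(m+1)/α := by positivity
    have hts : t = s * s := by
      rw [htdef, hsdef, ← Real.rpow_add hx0]; norm_num
    have hexplog : 4 + (m+1) * Real.log x ≤ t := by
      rw [hts]
      have h1 : (m+1) * Real.log x ≤ (m+1) * ((2/α) * s) :=
        mul_le_mul_of_nonneg_left hlog (by linarith)
      have hs4 : 4 ≤ s := by linarith
      have hmul : 0 ≤ (s - (2*(m+1)/α+4))*s := mul_nonneg (by linarith) (by linarith)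
      have he : (m+1) * ((2/α) * s) = 2*(m+1)/α*s := by ring
      nlinarith [h1, hmul, he, hs4]
    have hx1 : x + 1 ≤ Real.exp (1 + Real.log x) := by
      rw [Real.exp_add, Real.exp_log hx0]
      nlinarith [Real.add_one_le_exp 1]
    have hxm : x ^ m = Real.exp (m * Real.log x) := by
      rw [← Real.log_rpow hx0, Real.exp_log (Real.rpow_pos_of_pos hx0 m)]
    calc (x+1) * x^m * Real.exp 3
        ≤ Real.exp (1 + Real.log x) * Real.exp (m * Real.log x) * Real.exp 3 := by
          rw [hxm]
          exact mul_le_mul_of_nonneg_right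
            (mul_le_mul_of_nonneg_right hx1 (Real.exp_pos _).le) (Real.exp_pos _).le
      _ = Real.exp (4 + (m+1) * Real.log x) := by
          rw [← Real.exp_add, ← Real.exp_add]; ring_nf
      _ ≤ Real.exp t := by rw [Real.exp_le_exp]; exact hexplog
  rw [Real.rpow_neg hx0.le, Real.exp_neg, Real.exp_neg, ← mul_inv,
    show (x^m * Real.exp 3)⁻¹ = 1/(x^m * Real.exp 3) by rw [one_div],
    le_div_iff₀ (by positivity)]
  calc (x+1) * (Real.exp t)⁻¹ * (x^m * Real.exp 3)
      = ((x+1) * x^m * Real.exp 3) * (Real.exp t)⁻¹ := by ring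
    _ ≤ Real.exp t * (Real.exp t)⁻¹ := mul_le_mul_of_nonneg_right key (by positivity)
    _ = 1 := mul_inv_cancel₀ (Real.exp_pos t).ne'

/-- **Concentration of the radial weight** `e^{-r²} r^{N²-2}` around `r = N/√2`. -/
theorem radial_weight_concentration (α : ℝ) (hα0 : 0 < α) (hα1 : α < 1) (m : ℝ) (hm : 0 < m) :
    ∃ N₀ : ℕ, ∀ N : ℕ, N₀ ≤ N → 2 ≤ N →
      1 - (N : ℝ) ^ (-m) ≤
          (∫ r in Set.Icc ((N : ℝ) / Real.sqrt 2 - (N : ℝ) ^ α)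
              ((N : ℝ) / Real.sqrt 2 + (N : ℝ) ^ α), Real.exp (-r ^ 2) * r ^ (N ^ 2 - 2)) /
            (∫ r in Set.Ioi (0 : ℝ), Real.exp (-r ^ 2) * r ^ (N ^ 2 - 2)) ∧
        (∫ r in Set.Icc ((N : ℝ) / Real.sqrt 2 - (N : ℝ) ^ α)
              ((N : ℝ) / Real.sqrt 2 + (N : ℝ) ^ α), Real.exp (-r ^ 2) * r ^ (N ^ 2 - 2)) /
            (∫ r in Set.Ioi (0 : ℝ), Real.exp (-r ^ 2) * r ^ (N ^ 2 - 2)) ≤ 1 := by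
  obtain ⟨A, hA⟩ := eventual_rpow α 3 hα0
  obtain ⟨B, hB⟩ := eventual_rpow (α/2) (2*(m+1)/α + 4) (half_pos hα0)
  obtain ⟨D, hD⟩ := eventual_rpow (1-α) (2*Real.sqrt 2) (by linarith)
  refine ⟨max A (max B D), fun N hN hN2 => ?_⟩
  have hx2 : (2:ℝ) ≤ (N:ℝ) := by exact_mod_cast hN2
  have hx0 : (0:ℝ) < (N:ℝ) := by linarith
  have hkcast : (((N^2 - 2 : ℕ)):ℝ) = (N:ℝ)^2 - 2 := by
    push_cast [Nat.cast_sub (by nlinarith [hN2] : 2 ≤ N^2)]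
    ring
  have hρsq : Real.sqrt (((N:ℝ)^2 - 2)/2) ^ 2 = ((N:ℝ)^2-2)/2 := Real.sq_sqrt (by nlinarith)
  set x : ℝ := (N:ℝ)
  set ρ : ℝ := Real.sqrt ((x^2 - 2)/2) with hρdef
  have hρ1 : 1 ≤ ρ := by
    rw [hρdef, show (1:ℝ) = Real.sqrt 1 by simp]
    exact Real.sqrt_le_sqrt (by nlinarith)
  have hρ0 : 0 < ρ := by linarith
  have hk : (((N^2 - 2 : ℕ)):ℝ) = 2 * ρ^2 := by rw [hkcast, hρsq]; ring
  have hs2 : Real.sqrt 2 ^ 2 = 2 := Real.sq_sqrt (by norm_num)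
  have hs2pos : 0 < Real.sqrt 2 := Real.sqrt_pos.mpr (by norm_num)
  have hs2one : 1 ≤ Real.sqrt 2 := by nlinarith [hs2, hs2pos]
  set μ : ℝ := x / Real.sqrt 2 with hμdef
  have hμsq : μ^2 = x^2/2 := by rw [hμdef, div_pow, hs2]
  have hμ0 : 0 < μ := by positivity
  have hμρ2 : μ^2 = ρ^2 + 1 := by rw [hμsq, hρsq]; ring
  obtain ⟨hρμ, hμρ1⟩ := mu_rho_bounds hρ0 hμ0 hμρ2
  have hμx : μ ≤ x := by
    rw [hμdef, div_le_iff₀ hs2pos]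
    linarith [mul_le_mul_of_nonneg_left hs2one hx0.le]
  set t : ℝ := x ^ α with htdef
  have ht3 : 3 ≤ t := hA N (le_trans (le_max_left _ _) hN)
  have ht0 : 0 < t := by linarith
  have hxt : 2 * Real.sqrt 2 * t ≤ x := by
    have h1 : 2*Real.sqrt 2 ≤ x ^ (1-α) :=
      hD N (le_trans (le_trans (le_max_right B D) (le_max_right A (max B D))) hN)
    have h2 : x = x ^ (1-α) * x ^ α := by
      rw [← Real.rpow_add hx0]; norm_num
    calc 2*Real.sqrt 2 * t ≤ x ^ (1-α) * t := mul_le_mul_of_nonneg_right h1 ht0.le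
      _ = x := by rw [htdef, ← h2]
  set a : ℝ := μ - t with hadef
  set b : ℝ := μ + t with hbdef
  have hat : t ≤ a := by
    have h2t : 2 * t ≤ μ := by
      rw [hμdef, le_div_iff₀ hs2pos]; linarith [hxt]
    rw [hadef]; linarith
  have ha0 : 0 < a := by linarith
  have hab : a ≤ b := by rw [hadef, hbdef]; linarith
  have haρ : a ≤ ρ := by rw [hadef]; linarith
  have hbρ : 1 ≤ b - ρ := by rw [hbdef]; linarith
  have hax : a ≤ x := by rw [hadef]; linarith
  have htl : a * Real.exp (-(a-ρ)^2) + Real.exp (-(b-ρ)^2) ≤ x ^ (-m) * Real.exp (-3) := by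
    have e1 : Real.exp (-(a-ρ)^2) ≤ Real.exp (-t) := by
      rw [show (a-ρ)^2 = (ρ-a)^2 by ring]
      exact exp_bd ht3 (by rw [hadef]; linarith)
    have e2 : Real.exp (-(b-ρ)^2) ≤ Real.exp (-t) := by
      exact exp_bd ht3 (by rw [hbdef]; linarith)
    have hG : (x+1) * Real.exp (-(x^α)) ≤ x^(-m) * Real.exp (-3) :=
      G_ineq hα0 hm hx2 (hB N (le_trans (le_trans (le_max_left B D) (le_max_right A (max B D))) hN))
    calc a * Real.exp (-(a-ρ)^2) + Real.exp (-(b-ρ)^2)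
        ≤ x * Real.exp (-t) + Real.exp (-t) := by
          have h := mul_le_mul hax e1 (Real.exp_pos _).le hx0.le
          linarith [h, e2]
      _ = (x+1) * Real.exp (-t) := by ring
      _ ≤ x ^ (-m) * Real.exp (-3) := hG
  exact ratio_bounds hρ0 hk ha0 hab haρ hbρ htl
end
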